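/- Let X_1,...,X_n be i.i.d. X-valued random variables with law P, let f : X → ℝ have finite variance Var_P(f), and let δ ∈ (0,1). Let V ≤ n/2 be an integer with V ≥ ln(1/δ), and let B_1,...,B_V be a partition of {1,...,n} with | |B_K| − n/V | ≤ 1 for all K. Define the median-of-means estimator P̄_B f = median{ (1/|B_K|) Σ_{i∈B_K} f(X_i) : K = 1,...,V }. Then P( P̄_B f − Pf > L_1 √(Var_P f) √(V/n) ) ≤ δ, where L_1 = 2√(6e). -/

import Mathlib

open MeasureTheory ProbabilityTheory
open scoped ENNReal NNReal

/-- Auxiliary: events determined by disjoint blocks of independent random variables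
multiply under intersection. -/
lemma mom_indep_blocks {Ω E : Type*} [MeasurableSpace Ω] [MeasurableSpace E]
    (μ : Measure Ω) [IsProbabilityMeasure μ] {n V : ℕ}
    (X : Fin n → Ω → E) (hXmeas : ∀ i, Measurable (X i))
    (hindep : iIndepFun X μ)
    (B : Fin V → Finset (Fin n))
    (hdisj : Pairwise (fun K K' => Disjoint (B K) (B K')))
    (T : ∀ K : Fin V, Set ({i // i ∈ B K} → E))
    (hT : ∀ K, MeasurableSet (T K)) (S : Finset (Fin V)) :
    μ (⋂ K ∈ S, (fun ω (i : {i // i ∈ B K}) => X i.1 ω) ⁻¹' T K)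
      = ∏ K ∈ S, μ ((fun ω (i : {i // i ∈ B K}) => X i.1 ω) ⁻¹' T K) := by
  classical
  induction S using Finset.induction_on with
  | empty => simp
  | @insert k S hkS IH =>
    rw [Finset.set_biInter_insert, Finset.prod_insert hkS, ← IH]
    have hdisjBU : Disjoint (B k) (S.biUnion B) := by
      rw [Finset.disjoint_biUnion_right]
      exact fun K hK => hdisj (fun h => hkS (h ▸ hK))
    have hIndep2 := hindep.indepFun_finset (B k) (S.biUnion B) hdisjBU hXmeas
    have hsub : ∀ K, K ∈ S → ∀ i : {i // i ∈ B K}, i.1 ∈ S.biUnion B :=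
      fun K hK i => Finset.mem_biUnion.2 ⟨K, hK, i.2⟩
    set W : Set ({i // i ∈ S.biUnion B} → E) :=
      ⋂ K, ⋂ (hK : K ∈ S),
        (fun (x : {i // i ∈ S.biUnion B} → E) (i : {i // i ∈ B K}) =>
          x ⟨i.1, hsub K hK i⟩) ⁻¹' T K with hW
    have hWmeas : MeasurableSet W :=
      MeasurableSet.iInter fun K => MeasurableSet.iInter fun hK =>
        (measurable_pi_lambda _ fun i => measurable_pi_apply _) (hT K)
    have hpre : (fun ω (i : {i // i ∈ S.biUnion B}) => X i.1 ω) ⁻¹' W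
        = ⋂ K ∈ S, (fun ω (i : {i // i ∈ B K}) => X i.1 ω) ⁻¹' T K := by
      ext ω
      simp only [hW, Set.mem_preimage, Set.mem_iInter]
    rw [← hpre]
    exact hIndep2.measure_inter_preimage_eq_mul (T k) W (hT k) hWmeas

set_option maxHeartbeats 1000000 in
/-- Median-of-means concentration (Proposition 1): if `X 1, ..., X n` are i.i.d.
with law `P`, `f` has finite variance, `B 1, ..., B V` is a regular partition of
`{1,...,n}` with `ln(1/δ) ≤ V ≤ n/2`, and `med ω` is any median of the block
empirical means of `f`, then the median-of-means estimator deviates from `Pf`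
by more than `L₁ √(Var f) √(V/n)` with probability at most `δ`, `L₁ = 2√(6e)`. -/
theorem median_of_means_concentration
    {Ω E : Type*} [MeasurableSpace Ω] [MeasurableSpace E]
    (μ : Measure Ω) [IsProbabilityMeasure μ]
    (n V : ℕ) (hn : 0 < n) (hV : 0 < V)
    (X : Fin n → Ω → E) (hXmeas : ∀ i, Measurable (X i))
    (hindep : iIndepFun X μ)
    (P : Measure E) (hid : ∀ i, Measure.map (X i) μ = P)
    (f : E → ℝ) (hf : Measurable f) (hf2 : MemLp f 2 P)
    (δ : ℝ) (hδ : δ ∈ Set.Ioo (0 : ℝ) 1)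
    (hVlow : Real.log (1 / δ) ≤ (V : ℝ)) (hVup : (V : ℝ) ≤ (n : ℝ) / 2)
    (B : Fin V → Finset (Fin n))
    (hdisj : Pairwise (fun K K' => Disjoint (B K) (B K')))
    (hcover : Finset.univ.biUnion B = Finset.univ)
    (hreg : ∀ K, |((B K).card : ℝ) - (n : ℝ) / V| ≤ 1)
    (med : Ω → ℝ)
    (hmed : ∀ ω,
      (V : ℝ) ≤ 2 * (Finset.univ.filter (fun K =>
          ((B K).card : ℝ)⁻¹ * ∑ i ∈ B K, f (X i ω) ≤ med ω)).card ∧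
      (V : ℝ) ≤ 2 * (Finset.univ.filter (fun K =>
          med ω ≤ ((B K).card : ℝ)⁻¹ * ∑ i ∈ B K, f (X i ω))).card) :
    μ {ω | med ω - ∫ x, f x ∂P >
        (2 * Real.sqrt (6 * Real.exp 1)) * Real.sqrt (variance f P) *
          Real.sqrt ((V : ℝ) / n)} ≤ ENNReal.ofReal δ := by
  classical
  haveI hPprob : IsProbabilityMeasure P := by
    rw [← hid ⟨0, hn⟩]
    exact Measure.isProbabilityMeasure_map (hXmeas _).aemeasurable
  have hn' : (0:ℝ) < n := by exact_mod_cast hn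
  have hV' : (0:ℝ) < V := by exact_mod_cast hV
  have he : (0:ℝ) < Real.exp 1 := Real.exp_pos 1
  set Pf := ∫ x, f x ∂P with hPf
  set t := (2 * Real.sqrt (6 * Real.exp 1)) * Real.sqrt (variance f P) *
      Real.sqrt ((V : ℝ) / n) with ht
  -- basic facts about block sizes
  have h2 : (2:ℝ) ≤ (n:ℝ) / V := by
    rw [le_div_iff₀ hV']
    linarith
  have hcard1 : ∀ K, (1:ℝ) ≤ ((B K).card : ℝ) := by
    intro K
    have := (abs_le.1 (hreg K)).1
    linarith
  have hcardpos : ∀ K, 0 < (B K).card := by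
    intro K
    have : (1:ℝ) ≤ ((B K).card : ℝ) := hcard1 K
    exact_mod_cast lt_of_lt_of_le zero_lt_one this
  have hbKlow : ∀ K, (n:ℝ) / (2 * V) ≤ ((B K).card : ℝ) := by
    intro K
    have h1 := (abs_le.1 (hreg K)).1
    have : (n:ℝ) / (2 * V) = ((n:ℝ)/V)/2 := by
      rw [div_div]
      ring_nf
    rw [this]
    linarith
  -- facts about the individual variables f ∘ X i
  have hgmem : ∀ i, MemLp (fun ω => f (X i ω)) 2 μ := by
    intro i
    have h := hf2
    rw [← hid i] at h
    exact (memLp_map_measure_iff hf.aestronglyMeasurable (hXmeas i).aemeasurable).1 h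
  have hgmean : ∀ i, ∫ ω, f (X i ω) ∂μ = Pf := by
    intro i
    rw [hPf, ← hid i, integral_map (hXmeas i).aemeasurable hf.aestronglyMeasurable]
  have hgvar : ∀ i, variance (fun ω => f (X i ω)) μ = variance f P := by
    intro i
    rw [variance_eq_sub (hgmem i), variance_eq_sub hf2, ← hid i,
      integral_map (hXmeas i).aemeasurable hf.aestronglyMeasurable]
    simp only [Pi.pow_apply]
    rw [integral_map (hXmeas i).aemeasurable ((hf.pow_const 2).aestronglyMeasurable)]
  rcases eq_or_lt_of_le (variance_nonneg f P) with hσ | hσ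
  · -- degenerate case: variance is zero
    have ht0 : t = 0 := by
      rw [ht, ← hσ]
      simp
    have hev0 : evariance f P = 0 := by
      have h1 : (evariance f P).toReal = 0 := hσ.symm
      have h2 := hf2.evariance_lt_top
      exact (ENNReal.toReal_eq_zero_iff _).1 h1 |>.resolve_right h2.ne
    have hfae : ∀ᵐ x ∂P, f x = Pf :=
      (evariance_eq_zero_iff hf.aemeasurable).1 hev0
    have hae_i : ∀ i, ∀ᵐ ω ∂μ, f (X i ω) = Pf := by
      intro i
      have h := hfae
      rw [← hid i] at h
      exact (MeasureTheory.ae_map_iff (hXmeas i).aemeasurable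
        (measurableSet_eq_fun hf measurable_const)).1 h
    have hae : ∀ᵐ ω ∂μ, ∀ i, f (X i ω) = Pf := ae_all_iff.2 hae_i
    have hnull : μ {ω | med ω - Pf > t} = 0 := by
      rw [measure_eq_zero_iff_ae_notMem]
      filter_upwards [hae] with ω hω
      intro hmem
      simp only [Set.mem_setOf_eq, ht0] at hmem
      have h2' := (hmed ω).2
      have hFpos : (0:ℝ) <
          ((Finset.univ.filter (fun K =>
            med ω ≤ ((B K).card : ℝ)⁻¹ * ∑ i ∈ B K, f (X i ω))).card : ℝ) := by
        nlinarith
      have hFne : (Finset.univ.filter (fun K =>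
          med ω ≤ ((B K).card : ℝ)⁻¹ * ∑ i ∈ B K, f (X i ω))).Nonempty := by
        rw [← Finset.card_pos]
        exact_mod_cast hFpos
      obtain ⟨K, hK⟩ := hFne
      have hKle := (Finset.mem_filter.1 hK).2
      have hmeanK : ((B K).card : ℝ)⁻¹ * ∑ i ∈ B K, f (X i ω) = Pf := by
        rw [Finset.sum_congr rfl (fun i _ => hω i), Finset.sum_const, nsmul_eq_mul,
          ← mul_assoc, inv_mul_cancel₀ (by exact_mod_cast (hcardpos K).ne'), one_mul]
      rw [hmeanK] at hKle
      linarith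
    rw [hnull]
    exact bot_le
  -- main case: positive variance
  have hσne : variance f P ≠ 0 := hσ.ne'
  have ht2 : t ^ 2 = 24 * Real.exp 1 * variance f P * ((V:ℝ)/n) := by
    rw [ht, mul_pow, mul_pow, mul_pow, Real.sq_sqrt (by positivity),
      Real.sq_sqrt (variance_nonneg f P), Real.sq_sqrt (by positivity)]
    ring
  have htpos : 0 < t := by
    rw [ht]
    have h1 : 0 < Real.sqrt (6 * Real.exp 1) := Real.sqrt_pos.2 (by positivity)
    have h2' : 0 < Real.sqrt (variance f P) := Real.sqrt_pos.2 hσ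
    have h3 : 0 < Real.sqrt ((V:ℝ)/n) := Real.sqrt_pos.2 (by positivity)
    positivity
  set r : ℝ := (12 * Real.exp 1)⁻¹ with hr
  have hr0 : 0 ≤ r := by positivity
  have hr1 : r ≤ 1 := by
    rw [hr]
    have : (1:ℝ) ≤ 12 * Real.exp 1 := by nlinarith [Real.add_one_le_exp (1:ℝ)]
    exact inv_le_one_of_one_le₀ this
  -- the bad sets
  set T : ∀ K : Fin V, Set ({i // i ∈ B K} → E) := fun K =>
    {x | Pf + t < ((B K).card : ℝ)⁻¹ * ∑ i ∈ (B K).attach, f (x i)} with hT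
  have hTmeas : ∀ K, MeasurableSet (T K) := by
    intro K
    exact measurableSet_lt measurable_const
      (measurable_const.mul (Finset.measurable_sum _
        (fun i _ => hf.comp (measurable_pi_apply i))))
  set A : Fin V → Set Ω := fun K =>
    (fun ω (i : {i // i ∈ B K}) => X i.1 ω) ⁻¹' T K with hA
  have hAmem : ∀ K ω, ω ∈ A K ↔
      Pf + t < ((B K).card : ℝ)⁻¹ * ∑ i ∈ B K, f (X i ω) := by
    intro K ω
    simp only [hA, hT, Set.mem_preimage, Set.mem_setOf_eq]
    rw [Finset.sum_attach (B K) (fun i => f (X i ω))]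
  -- Chebyshev bound on each bad set
  have hcheb : ∀ K, μ (A K) ≤ ENNReal.ofReal r := by
    intro K
    set bK : ℝ := ((B K).card : ℝ) with hbK
    have hbKpos : 0 < bK := lt_of_lt_of_le zero_lt_one (hcard1 K)
    set Z : Ω → ℝ := fun ω => ∑ i ∈ B K, f (X i ω) with hZ
    have hZ2 : MemLp Z 2 μ := by
      have : Z = ∑ i ∈ B K, (fun ω => f (X i ω)) := by
        ext ω
        simp [hZ]
      rw [this]
      exact memLp_finset_sum' _ (fun i _ => hgmem i)
    have hmeanZ : μ[Z] = bK * Pf := by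
      rw [hZ]
      rw [integral_finset_sum _ (fun i _ => (hgmem i).integrable one_le_two)]
      simp [hgmean, Finset.sum_const, nsmul_eq_mul, hbK]
    have hvarZ : variance Z μ = bK * variance f P := by
      have hZeq : Z = ∑ i ∈ B K, (fun ω => f (X i ω)) := by
        ext ω
        simp [hZ]
      rw [hZeq, IndepFun.variance_sum (fun i _ => hgmem i)
        (fun i _ j _ hij =>
          ((hindep.comp (fun _ => f) (fun _ => hf)).indepFun hij))]
      simp [hgvar, Finset.sum_const, nsmul_eq_mul, hbK]
    have hsub : A K ⊆ {ω | bK * t ≤ |Z ω - μ[Z]|} := by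
      intro ω hω
      rw [hAmem] at hω
      simp only [Set.mem_setOf_eq]
      have h1 : bK * (Pf + t) < bK * (bK⁻¹ * Z ω) := by
        exact (mul_lt_mul_iff_right₀ hbKpos).2 hω
      rw [← mul_assoc, mul_inv_cancel₀ hbKpos.ne', one_mul] at h1
      rw [hmeanZ]
      have : bK * t ≤ Z ω - bK * Pf := by nlinarith
      exact this.trans (le_abs_self _)
    calc μ (A K) ≤ μ {ω | bK * t ≤ |Z ω - μ[Z]|} := measure_mono hsub
      _ ≤ ENNReal.ofReal (variance Z μ / (bK * t) ^ 2) :=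
          meas_ge_le_variance_div_sq hZ2 (by positivity)
      _ ≤ ENNReal.ofReal r := by
          apply ENNReal.ofReal_le_ofReal
          rw [hvarZ]
          have heq : bK * variance f P / (bK * t) ^ 2
              = variance f P / (bK * t ^ 2) := by
            rw [show (bK * t) ^ 2 = bK * (bK * t ^ 2) by ring,
              mul_div_mul_left _ _ hbKpos.ne']
          rw [heq]
          have hkey : 12 * Real.exp 1 * variance f P ≤ bK * t ^ 2 := by
            have step1 : (12:ℝ) * Real.exp 1 * variance f P
                = ((n:ℝ)/(2*V)) * (24 * Real.exp 1 * variance f P * ((V:ℝ)/n)) := by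
              field_simp
              ring
            rw [step1, ← ht2]
            exact mul_le_mul_of_nonneg_right (hbKlow K) (by positivity)
          calc variance f P / (bK * t ^ 2)
              ≤ variance f P / (12 * Real.exp 1 * variance f P) :=
                div_le_div_of_nonneg_left (variance_nonneg f P) (by positivity) hkey
            _ = r := by
                rw [hr]
                field_simp
  -- product rule over blocks
  have hprod : ∀ S : Finset (Fin V), μ (⋂ K ∈ S, A K) = ∏ K ∈ S, μ (A K) := by
    intro S
    exact mom_indep_blocks μ X hXmeas hindep B hdisj T hTmeas S
  -- combinatorial step
  set m : ℕ := (V + 1) / 2 with hm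
  have hEvsub : {ω | med ω - Pf > t} ⊆
      ⋃ S ∈ Finset.univ.powersetCard m, ⋂ K ∈ S, A K := by
    intro ω hω
    simp only [Set.mem_setOf_eq] at hω
    set F := Finset.univ.filter (fun K =>
      med ω ≤ ((B K).card : ℝ)⁻¹ * ∑ i ∈ B K, f (X i ω)) with hF
    have h2' := (hmed ω).2
    have hVF : V ≤ 2 * F.card := by exact_mod_cast h2'
    have hmF : m ≤ F.card := by omega
    obtain ⟨S, hSF, hScard⟩ := Finset.exists_subset_card_eq hmF
    refine Set.mem_iUnion₂.2 ⟨S, Finset.mem_powersetCard.2 ⟨Finset.subset_univ S, hScard⟩, ?_⟩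
    refine Set.mem_iInter₂.2 fun K hK => ?_
    rw [hAmem]
    have hKF := Finset.mem_filter.1 (hSF hK)
    linarith [hKF.2]
  -- putting it together
  have hmain : μ {ω | med ω - Pf > t} ≤ (V.choose m : ℝ≥0∞) * ENNReal.ofReal r ^ m := by
    calc μ {ω | med ω - Pf > t}
        ≤ μ (⋃ S ∈ Finset.univ.powersetCard m, ⋂ K ∈ S, A K) := measure_mono hEvsub
      _ ≤ ∑ S ∈ Finset.univ.powersetCard m, μ (⋂ K ∈ S, A K) :=
          measure_biUnion_finset_le _ _
      _ ≤ ∑ _S ∈ Finset.univ.powersetCard m, ENNReal.ofReal r ^ m := by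
          apply Finset.sum_le_sum
          intro S hS
          rw [hprod S]
          have hScard := (Finset.mem_powersetCard.1 hS).2
          calc ∏ K ∈ S, μ (A K) ≤ ∏ _K ∈ S, ENNReal.ofReal r :=
                Finset.prod_le_prod' (fun K _ => hcheb K)
            _ = ENNReal.ofReal r ^ m := by rw [Finset.prod_const, hScard]
      _ = (V.choose m : ℝ≥0∞) * ENNReal.ofReal r ^ m := by
          rw [Finset.sum_const, Finset.card_powersetCard, Finset.card_univ,
            Fintype.card_fin, nsmul_eq_mul]
  -- the numerical bound
  have hreal : (V.choose m : ℝ) * r ^ m ≤ δ := by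
    have hchoose : (V.choose m : ℝ) ≤ 2 ^ V := by
      have h1 : V.choose m ≤ ∑ i ∈ Finset.range (V + 1), V.choose i :=
        Finset.single_le_sum (fun i _ => Nat.zero_le _)
          (Finset.mem_range.2 (by omega))
      have h2' : (V.choose m : ℝ) ≤ ((2:ℕ) ^ V : ℕ) := by
        exact_mod_cast h1.trans (le_of_eq (Nat.sum_range_choose V))
      exact_mod_cast h2'
    have hexpδ : Real.exp (-(V:ℝ)) ≤ δ := by
      have h1 : -(V:ℝ) ≤ Real.log δ := by
        rw [one_div, Real.log_inv] at hVlow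
        linarith
      calc Real.exp (-(V:ℝ)) ≤ Real.exp (Real.log δ) := Real.exp_le_exp.2 h1
        _ = δ := Real.exp_log hδ.1
    have hsq : (2 ^ V * r ^ m) ^ 2 ≤ Real.exp (-(V:ℝ)) ^ 2 := by
      have e1 : ((2:ℝ) ^ V * r ^ m) ^ 2 = 4 ^ V * r ^ (2 * m) := by
        rw [mul_pow, ← pow_mul, ← pow_mul, show (4:ℝ) = 2^2 by norm_num, ← pow_mul]
        ring_nf
      have e2 : r ^ (2 * m) ≤ r ^ V := pow_le_pow_of_le_one hr0 hr1 (by omega)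
      have e3 : (4:ℝ) ^ V * r ^ V = (4 * r) ^ V := (mul_pow _ _ _).symm
      have h4r : 4 * r ≤ Real.exp (-2) := by
        have hre : 4 * r = (3 * Real.exp 1)⁻¹ := by
          rw [hr]
          field_simp
          ring
        rw [hre, Real.exp_neg]
        apply inv_anti₀ (by positivity)
        have hexp2 : Real.exp 2 = Real.exp 1 * Real.exp 1 := by
          rw [← Real.exp_add]
          norm_num
        rw [hexp2]
        nlinarith [Real.exp_one_lt_d9.le]
      have e4 : ((4:ℝ) * r) ^ V ≤ Real.exp (-2) ^ V :=
        pow_le_pow_left₀ (by positivity) h4r V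
      have e5 : Real.exp (-2) ^ V = Real.exp (-(V:ℝ)) ^ 2 := by
        rw [← Real.exp_nat_mul, ← Real.exp_nat_mul]
        ring_nf
      calc ((2:ℝ) ^ V * r ^ m) ^ 2 = 4 ^ V * r ^ (2 * m) := e1
        _ ≤ 4 ^ V * r ^ V := by
            apply mul_le_mul_of_nonneg_left e2 (by positivity)
        _ = (4 * r) ^ V := e3
        _ ≤ Real.exp (-2) ^ V := e4
        _ = Real.exp (-(V:ℝ)) ^ 2 := e5
    have hab : (2:ℝ) ^ V * r ^ m ≤ Real.exp (-(V:ℝ)) := by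
      have ha : (0:ℝ) ≤ 2 ^ V * r ^ m := by positivity
      calc (2:ℝ) ^ V * r ^ m = Real.sqrt ((2 ^ V * r ^ m) ^ 2) :=
            (Real.sqrt_sq ha).symm
        _ ≤ Real.sqrt (Real.exp (-(V:ℝ)) ^ 2) := Real.sqrt_le_sqrt hsq
        _ = Real.exp (-(V:ℝ)) := Real.sqrt_sq (Real.exp_pos _).le
    calc (V.choose m : ℝ) * r ^ m ≤ 2 ^ V * r ^ m :=
          mul_le_mul_of_nonneg_right hchoose (by positivity)
      _ ≤ Real.exp (-(V:ℝ)) := hab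
      _ ≤ δ := hexpδ
  calc μ {ω | med ω - Pf > t} ≤ (V.choose m : ℝ≥0∞) * ENNReal.ofReal r ^ m := hmain
    _ = ENNReal.ofReal ((V.choose m : ℝ) * r ^ m) := by
        rw [ENNReal.ofReal_mul (by positivity), ← ENNReal.ofReal_pow hr0,
          ENNReal.ofReal_natCast]
    _ ≤ ENNReal.ofReal δ := ENNReal.ofReal_le_ofReal hreal
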